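/- There exists a constant C₀ < ∞ such that for every N ≥ 2, every α ∈ {1,2}, every m ≥ 1 and every k ∈ 𝕋², ∫_{𝕋²} Pᵐ(k,dk') ∫_0^∞ e^{-z} z |ψ^α(k')| 𝟙{z|ψ^α(k')| > √N} dz ≤ C₀/√N; equivalently, for the Markov chain (X_n) with i.i.d. mean-one exponential times (e_n) independent of the chain, E[e_n|ψ^α(X_n)| 𝟙{e_n|ψ^α(X_n)| > √N}] ≤ C₀/√N for all n ≥ 1. -/

import Mathlib

open MeasureTheory Real Filter Set
open scoped ENNReal NNReal

noncomputable section

instance : Fact ((0:ℝ) < 1) := ⟨one_pos⟩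

/-- The one-dimensional torus `ℝ/ℤ`. -/
abbrev Torus := AddCircle (1 : ℝ)

/-- The two-dimensional torus `𝕋²`. -/
abbrev T2 := Torus × Torus

lemma sin_sq_periodic : Function.Periodic (fun x : ℝ => Real.sin (π * x) ^ 2) 1 := by
  intro x
  simp only []
  have h : π * (x + 1) = π * x + π := by ring
  rw [h, Real.sin_add_pi]
  ring

lemma sincos_periodic :
    Function.Periodic (fun x : ℝ => Real.sin (π * x) * Real.cos (π * x)) 1 := by
  intro x
  simp only []
  have h : π * (x + 1) = π * x + π := by ring
  rw [h, Real.sin_add_pi, Real.cos_add_pi]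
  ring

/-- `sin²(π k)` as a function on the circle. -/
def sin2 : Torus → ℝ := sin_sq_periodic.lift

/-- `sin(π k) cos(π k)` as a function on the circle. -/
def sincos : Torus → ℝ := sincos_periodic.lift

/-- The components of a point of the torus. -/
def tcomp (k : T2) : Fin 2 → Torus := ![k.1, k.2]

/-- `Φ(k) = 8 ∑_α sin²(π k_α)`. -/
def Phi (k : T2) : ℝ := 8 * (sin2 k.1 + sin2 k.2)

/-- The scattering kernel `R(k,k') = 16 ∑_α sin²(π k_α) sin²(π k'_α)`. -/
def Rker (k k' : T2) : ℝ := 16 * (sin2 k.1 * sin2 k'.1 + sin2 k.2 * sin2 k'.2)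

/-- The velocity `v_α(k) = sin(π k_α) cos(π k_α) / (∑_β sin²(π k_β))^{1/2}`. -/
def vel (α : Fin 2) (k : T2) : ℝ :=
  sincos (tcomp k α) / Real.sqrt (sin2 k.1 + sin2 k.2)

/-- `ψ(k) = Φ(k)⁻¹ v(k)`. -/
def psiC (α : Fin 2) (k : T2) : ℝ := vel α k / Phi k

/-- The Markov transition kernel `P(k,dk') = Φ(k)⁻¹ R(k,k') dk'` on `𝕋²`. -/
def Pker (k : T2) : Measure T2 :=
  (volume : Measure T2).withDensity fun k' => ENNReal.ofReal ((Phi k)⁻¹ * Rker k k')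

/-- The `m`-step kernel (`Pn 0 k` is the Dirac mass at `k`). -/
def Pn : ℕ → T2 → Measure T2
  | 0, k => Measure.dirac k
  | (m + 1), k => (Pn m k).bind Pker

/-- The measure `π(dk) = (1/8) Φ(k) dk`. -/
def piM : Measure T2 :=
  (volume : Measure T2).withDensity fun k => ENNReal.ofReal ((1 / 8) * Phi k)

/-- The exponential distribution with mean one. -/
def expMeasure : Measure ℝ :=
  (volume : Measure ℝ).withDensity fun z =>
    if 0 ≤ z then ENNReal.ofReal (Real.exp (-z)) else 0


lemma sin2_coe (x : ℝ) : sin2 (x : Torus) = Real.sin (π * x) ^ 2 := rfl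
lemma sincos_coe (x : ℝ) : sincos (x : Torus) = Real.sin (π*x) * Real.cos (π*x) := rfl

lemma continuous_sin2 : Continuous sin2 := by
  have h : Continuous fun x : ℝ => Real.sin (π*x)^2 := by continuity
  exact h.quotient_liftOn' _

lemma continuous_sincos : Continuous sincos := by
  have h : Continuous fun x : ℝ => Real.sin (π*x) * Real.cos (π*x) := by continuity
  exact h.quotient_liftOn' _

lemma sin2_nonneg (t : Torus) : 0 ≤ sin2 t := by
  induction t using QuotientAddGroup.induction_on with
  | H x => rw [sin2_coe]; positivity

lemma Phi_nonneg (k : T2) : 0 ≤ Phi k := by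
  have := sin2_nonneg k.1; have := sin2_nonneg k.2; unfold Phi; linarith

lemma Rker_nonneg (k k' : T2) : 0 ≤ Rker k k' := by
  have := sin2_nonneg k.1; have := sin2_nonneg k.2
  have := sin2_nonneg k'.1; have := sin2_nonneg k'.2
  unfold Rker; nlinarith

lemma continuous_Phi : Continuous Phi :=
  continuous_const.mul ((continuous_sin2.comp continuous_fst).add
    (continuous_sin2.comp continuous_snd))

lemma abs_sincos_le (t : Torus) : |sincos t| ≤ Real.sqrt (sin2 t) := by
  induction t using QuotientAddGroup.induction_on with
  | H x =>
    rw [sincos_coe, sin2_coe, Real.sqrt_sq_eq_abs, abs_mul]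
    exact mul_le_of_le_one_right (abs_nonneg _) (Real.abs_cos_le_one _)

lemma abs_vel_le_one (α : Fin 2) (k : T2) : |vel α k| ≤ 1 := by
  have hs : 0 ≤ sin2 k.1 + sin2 k.2 := add_nonneg (sin2_nonneg _) (sin2_nonneg _)
  have ht : sin2 (tcomp k α) ≤ sin2 k.1 + sin2 k.2 := by
    fin_cases α <;> simp [tcomp] <;>
      [linarith [sin2_nonneg k.2]; linarith [sin2_nonneg k.1]]
  have h1 : |sincos (tcomp k α)| ≤ Real.sqrt (sin2 k.1 + sin2 k.2) :=
    (abs_sincos_le _).trans (Real.sqrt_le_sqrt ht)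
  rw [vel, abs_div, abs_of_nonneg (Real.sqrt_nonneg _)]
  rcases eq_or_lt_of_le (Real.sqrt_nonneg (sin2 k.1 + sin2 k.2)) with h | h
  · rw [← h]; simp
  · exact (div_le_one h).mpr h1

lemma abs_psiC_le (α : Fin 2) (k : T2) : |psiC α k| ≤ (Phi k)⁻¹ := by
  rw [psiC, abs_div, abs_of_nonneg (Phi_nonneg k), ← one_div]
  rcases eq_or_lt_of_le (Phi_nonneg k) with h | h
  · rw [← h]; simp
  · gcongr
    exact abs_vel_le_one α k
lemma sin2_le_one (t : Torus) : sin2 t ≤ 1 := by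
  induction t using QuotientAddGroup.induction_on with
  | H x => rw [sin2_coe]; exact Real.sin_sq_le_one _

lemma integrable_of_bounded {f : T2 → ℝ} (hm : AEStronglyMeasurable f (volume : Measure T2))
    {C : ℝ} (hC : ∀ k, |f k| ≤ C) : Integrable f (volume : Measure T2) :=
  Integrable.mono' (integrable_const C) hm (ae_of_all _ hC)

/-- density of the dominating measure, as an `ℝ≥0`-valued function. -/
def phi4 (k : T2) : ℝ≥0 := Real.toNNReal (Phi k / 4)

lemma measurable_phi4 : Measurable phi4 :=
  ((continuous_Phi.div_const 4).measurable).real_toNNReal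

lemma coe_phi4 (k : T2) : (phi4 k : ℝ) = Phi k / 4 :=
  Real.coe_toNNReal _ (div_nonneg (Phi_nonneg k) (by norm_num))

/-- The dominating measure `ν = (Φ/4)·Leb`. -/
def nu : Measure T2 := (volume : Measure T2).withDensity fun k => (phi4 k : ℝ≥0∞)

lemma density_le (q k' : T2) :
    ENNReal.ofReal ((Phi q)⁻¹ * Rker q k') ≤ ((phi4 k' : ℝ≥0) : ℝ≥0∞) := by
  have h4 : ((phi4 k' : ℝ≥0) : ℝ≥0∞) = ENNReal.ofReal (Phi k' / 4) := rfl
  rw [h4]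
  apply ENNReal.ofReal_le_ofReal
  rcases eq_or_lt_of_le (Phi_nonneg q) with h | h
  · have h1 : sin2 q.1 = 0 := by
      have := sin2_nonneg q.1; have := sin2_nonneg q.2
      have hq : (0:ℝ) = 8 * (sin2 q.1 + sin2 q.2) := h
      linarith
    have h2 : sin2 q.2 = 0 := by
      have := sin2_nonneg q.1; have := sin2_nonneg q.2
      have hq : (0:ℝ) = 8 * (sin2 q.1 + sin2 q.2) := h
      linarith
    have : Rker q k' = 0 := by unfold Rker; rw [h1, h2]; ring
    rw [this, mul_zero]
    exact div_nonneg (Phi_nonneg k') (by norm_num)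
  · rw [inv_mul_le_iff₀ h]
    unfold Rker Phi
    nlinarith [sin2_nonneg q.1, sin2_nonneg q.2, sin2_nonneg k'.1, sin2_nonneg k'.2,
      mul_nonneg (sin2_nonneg q.1) (sin2_nonneg k'.2),
      mul_nonneg (sin2_nonneg q.2) (sin2_nonneg k'.1)]

lemma Pker_le_nu (q : T2) : Pker q ≤ nu :=
  withDensity_mono (ae_of_all _ fun k' => density_le q k')

lemma measurable_sin2 : Measurable sin2 := continuous_sin2.measurable

lemma measurable_Rker2 : Measurable (fun p : T2 × T2 => Rker p.1 p.2) := by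
  unfold Rker
  exact measurable_const.mul
    (((measurable_sin2.comp (measurable_fst.comp measurable_fst)).mul
      (measurable_sin2.comp (measurable_fst.comp measurable_snd))).add
     ((measurable_sin2.comp (measurable_snd.comp measurable_fst)).mul
      (measurable_sin2.comp (measurable_snd.comp measurable_snd))))

lemma measurable_Pker : Measurable Pker := by
  apply Measure.measurable_of_measurable_coe
  intro s hs
  simp only [Pker]
  simp_rw [withDensity_apply _ hs]
  exact Measurable.lintegral_prod_right'
    (f := fun p : T2 × T2 => ENNReal.ofReal ((Phi p.1)⁻¹ * Rker p.1 p.2))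
    (ENNReal.measurable_ofReal.comp
      (((continuous_Phi.measurable.comp measurable_fst).inv).mul measurable_Rker2))

lemma integral_sin2 : ∫ t : Torus, sin2 t = 1/2 := by
  have h := AddCircle.integral_preimage (T := 1) 0 sin2
  rw [← h, ← intervalIntegral.integral_of_le (by norm_num : (0:ℝ) ≤ 0+1)]
  have hcoe : (fun a : ℝ => sin2 (a : Torus)) = fun a : ℝ => Real.sin (π * a) ^ 2 := rfl
  rw [show ((0:ℝ)+1) = 1 by norm_num]
  calc (∫ x in (0:ℝ)..1, sin2 (x : Torus))
      = ∫ x in (0:ℝ)..1, Real.sin (π * x) ^ 2 := by rw [intervalIntegral.integral_congr]; intro x _; rfl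
    _ = π⁻¹ • ∫ x in (π*0)..(π*1), Real.sin x ^ 2 :=
        intervalIntegral.integral_comp_mul_left (fun y => Real.sin y ^ 2) Real.pi_ne_zero
    _ = 1/2 := by
        rw [mul_zero, mul_one, integral_sin_sq]
        simp [Real.sin_pi, Real.sin_zero]
        field_simp
lemma torus_univ_toReal : ((volume : Measure Torus) Set.univ).toReal = 1 := by
  rw [AddCircle.measure_univ]; simp

lemma integral_sin2_fst : ∫ k' : T2, sin2 k'.1 = 1/2 := by
  rw [Measure.volume_eq_prod]
  have h := MeasureTheory.integral_prod_mul (μ := (volume : Measure Torus))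
    (ν := (volume : Measure Torus)) sin2 (fun _ => (1:ℝ))
  simp only [mul_one] at h
  rw [h, integral_sin2, integral_const, measureReal_def, torus_univ_toReal]
  simp

lemma integral_sin2_snd : ∫ k' : T2, sin2 k'.2 = 1/2 := by
  rw [Measure.volume_eq_prod]
  have h := MeasureTheory.integral_prod_mul (μ := (volume : Measure Torus))
    (ν := (volume : Measure Torus)) (fun _ => (1:ℝ)) sin2
  simp only [one_mul] at h
  rw [h, integral_sin2, integral_const, measureReal_def, torus_univ_toReal]
  simp

lemma integrable_sin2_fst : Integrable (fun k' : T2 => sin2 k'.1) (volume : Measure T2) :=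
  integrable_of_bounded ((measurable_sin2.comp measurable_fst).aestronglyMeasurable)
    (C := 1) (fun k => abs_le.mpr ⟨by linarith [sin2_nonneg k.1], sin2_le_one k.1⟩)

lemma integrable_sin2_snd : Integrable (fun k' : T2 => sin2 k'.2) (volume : Measure T2) :=
  integrable_of_bounded ((measurable_sin2.comp measurable_snd).aestronglyMeasurable)
    (C := 1) (fun k => abs_le.mpr ⟨by linarith [sin2_nonneg k.2], sin2_le_one k.2⟩)

lemma integrable_Rker (q : T2) : Integrable (fun k' => Rker q k') (volume : Measure T2) := by
  have : (fun k' => Rker q k') =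
      fun k' : T2 => 16 * (sin2 q.1 * sin2 k'.1 + sin2 q.2 * sin2 k'.2) := rfl
  rw [this]
  exact (((integrable_sin2_fst.const_mul _).add (integrable_sin2_snd.const_mul _)).const_mul 16)

lemma integral_Rker (q : T2) : ∫ k', Rker q k' = Phi q := by
  have : (fun k' => Rker q k') =
      fun k' : T2 => 16 * (sin2 q.1 * sin2 k'.1 + sin2 q.2 * sin2 k'.2) := rfl
  rw [this]
  rw [integral_const_mul, integral_add (integrable_sin2_fst.const_mul _)
    (integrable_sin2_snd.const_mul _), integral_const_mul, integral_const_mul,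
    integral_sin2_fst, integral_sin2_snd]
  unfold Phi; ring

lemma Pker_univ_le (q : T2) : Pker q Set.univ ≤ 1 := by
  rw [Pker, withDensity_apply _ MeasurableSet.univ, Measure.restrict_univ]
  have hnn : 0 ≤ᵐ[(volume : Measure T2)] fun k' => (Phi q)⁻¹ * Rker q k' :=
    ae_of_all _ fun k' => mul_nonneg (inv_nonneg.mpr (Phi_nonneg q)) (Rker_nonneg q k')
  have hint : Integrable (fun k' => (Phi q)⁻¹ * Rker q k') (volume : Measure T2) :=
    (integrable_Rker q).const_mul _
  rw [← ofReal_integral_eq_lintegral_ofReal hint hnn, integral_const_mul, integral_Rker]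
  rcases eq_or_lt_of_le (Phi_nonneg q) with h | h
  · rw [← h, mul_zero]; simp
  · rw [inv_mul_cancel₀ h.ne']; simp

lemma Pn_univ_le (m : ℕ) (k : T2) : Pn m k Set.univ ≤ 1 := by
  induction m generalizing k with
  | zero => simp [Pn]
  | succ m ih =>
    rw [Pn, Measure.bind_apply MeasurableSet.univ measurable_Pker.aemeasurable]
    calc ∫⁻ q, Pker q Set.univ ∂(Pn m k)
        ≤ ∫⁻ _, 1 ∂(Pn m k) := lintegral_mono fun q => Pker_univ_le q
      _ = Pn m k Set.univ := lintegral_one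
      _ ≤ 1 := ih k

lemma Pn_le_nu {m : ℕ} (hm : 1 ≤ m) (k : T2) : Pn m k ≤ nu := by
  obtain ⟨m', rfl⟩ : ∃ m', m = m' + 1 := ⟨m - 1, by omega⟩
  rw [Pn]
  refine Measure.le_iff.mpr fun s hs => ?_
  rw [Measure.bind_apply hs measurable_Pker.aemeasurable]
  calc ∫⁻ q, Pker q s ∂(Pn m' k)
      ≤ ∫⁻ _, nu s ∂(Pn m' k) := lintegral_mono fun q => Pker_le_nu q s
    _ = nu s * Pn m' k Set.univ := lintegral_const _
    _ ≤ nu s * 1 := mul_le_mul_right (Pn_univ_le m' k) _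
    _ = nu s := mul_one _
lemma xexp_le {x : ℝ} (hx : 0 ≤ x) : x * Real.exp (-(x/4)) ≤ 4 / Real.exp 1 := by
  have h : x/4 ≤ Real.exp (x/4 - 1) := by linarith [Real.add_one_le_exp (x/4 - 1)]
  rw [Real.exp_sub] at h
  have he : (0:ℝ) < Real.exp 1 := Real.exp_pos 1
  have hE : (0:ℝ) < Real.exp (x/4) := Real.exp_pos _
  have key : x * Real.exp 1 ≤ 4 * Real.exp (x/4) := by
    have h' := (le_div_iff₀ he).mp (by linarith : x/4 ≤ Real.exp (x/4) / Real.exp 1)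
    nlinarith
  have hrw : x * Real.exp (-(x/4)) = x / Real.exp (x/4) := by
    rw [Real.exp_neg]; ring
  rw [hrw, div_le_div_iff₀ hE he]
  linarith

lemma inner_bound {c a : ℝ} (hc : 0 ≤ c) (ha : 0 ≤ a) :
    (∫ z in Set.Ioi (0:ℝ), Real.exp (-z) * z * a * (if c < z * a then 1 else 0))
      ≤ 3 * (a * Real.exp (-(c / (4 * a)))) := by
  set C := a * Real.exp (-(c / (4 * a))) * (4 / Real.exp 1) with hC
  have hCnn : 0 ≤ C := by positivity
  have key : ∀ z ∈ Set.Ioi (0:ℝ),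
      Real.exp (-z) * z * a * (if c < z * a then 1 else 0) ≤ C * Real.exp (-(1/2) * z) := by
    intro z hz
    simp only [Set.mem_Ioi] at hz
    by_cases hind : c < z * a
    · rw [if_pos hind, mul_one]
      have hapos : 0 < a := by
        rcases eq_or_lt_of_le ha with h0 | h0
        · exfalso; rw [← h0] at hind; simp at hind; linarith
        · exact h0
      have h1 : c / (4 * a) ≤ z / 4 := by
        rw [div_le_div_iff₀ (by positivity) (by norm_num)]
        nlinarith
      have h2 : Real.exp (-(z/4)) ≤ Real.exp (-(c/(4*a))) := Real.exp_le_exp.mpr (by linarith)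
      have h3 : z * Real.exp (-(z/4)) ≤ 4 / Real.exp 1 := xexp_le hz.le
      have hsplit : Real.exp (-z) = Real.exp (-(z/4)) * Real.exp (-(z/4)) * Real.exp (-(1/2)*z) := by
        rw [← Real.exp_add, ← Real.exp_add]; ring_nf
      rw [hsplit]
      calc Real.exp (-(z/4)) * Real.exp (-(z/4)) * Real.exp (-(1/2)*z) * z * a
          = (Real.exp (-(z/4)) * (z * Real.exp (-(z/4)))) * (a * Real.exp (-(1/2)*z)) := by ring
        _ ≤ (Real.exp (-(c/(4*a))) * (4 / Real.exp 1)) * (a * Real.exp (-(1/2)*z)) := by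
            refine mul_le_mul_of_nonneg_right
              (mul_le_mul h2 h3 (by positivity) (Real.exp_pos _).le) (by positivity)
        _ = C * Real.exp (-(1/2)*z) := by rw [hC]; ring
    · rw [if_neg hind, mul_zero]
      positivity
  have hexp_int : IntegrableOn (fun z : ℝ => Real.exp (-(1/2) * z)) (Set.Ioi 0) volume :=
    exp_neg_integrableOn_Ioi 0 (by norm_num : (0:ℝ) < 1/2)
  have hint : IntegrableOn (fun z : ℝ => C * Real.exp (-(1/2)*z)) (Set.Ioi 0) volume :=
    hexp_int.const_mul C
  have hmono : (∫ z in Set.Ioi (0:ℝ), Real.exp (-z) * z * a * (if c < z * a then 1 else 0))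
      ≤ ∫ z in Set.Ioi (0:ℝ), C * Real.exp (-(1/2)*z) := by
    refine integral_mono_of_nonneg ?_ hint ?_
    · refine (ae_restrict_iff' measurableSet_Ioi).mpr (ae_of_all _ fun z hz => ?_)
      simp only [Set.mem_Ioi] at hz
      refine mul_nonneg (mul_nonneg (mul_nonneg (Real.exp_pos _).le hz.le) ha) ?_
      split_ifs <;> norm_num
    · exact (ae_restrict_iff' measurableSet_Ioi).mpr (ae_of_all _ key)
  have hval : (∫ z in Set.Ioi (0:ℝ), Real.exp (-(1/2) * z)) = 2 := by
    have h := integral_comp_mul_left_Ioi (fun x : ℝ => Real.exp (-x)) 0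
      (by norm_num : (0:ℝ) < 1/2)
    simp only [mul_zero] at h
    have hsh : (fun x : ℝ => Real.exp (-(1/2 * x))) = fun x : ℝ => Real.exp (-(1/2) * x) := by
      funext x; ring_nf
    rw [hsh] at h
    rw [h, integral_exp_neg_Ioi_zero]
    norm_num
  calc (∫ z in Set.Ioi (0:ℝ), Real.exp (-z) * z * a * (if c < z * a then 1 else 0))
      ≤ ∫ z in Set.Ioi (0:ℝ), C * Real.exp (-(1/2)*z) := hmono
    _ = C * 2 := by rw [integral_const_mul, hval]
    _ ≤ 3 * (a * Real.exp (-(c / (4 * a)))) := by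
        rw [hC]
        have he : (2.7182818283:ℝ) < Real.exp 1 := Real.exp_one_gt_d9
        have hE : (0:ℝ) ≤ a * Real.exp (-(c / (4 * a))) := by positivity
        have h8 : 4 / Real.exp 1 * 2 ≤ 3 := by
          rw [div_mul_eq_mul_div, div_le_iff₀ (Real.exp_pos 1)]; nlinarith
        nlinarith [mul_le_mul_of_nonneg_left h8 hE]

lemma psi_exp_le {c : ℝ} (hc : 0 ≤ c) (α : Fin 2) (k : T2) :
    |psiC α k| * Real.exp (-(c / (4 * |psiC α k|))) ≤
      (Phi k)⁻¹ * Real.exp (-(c * Phi k / 4)) := by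
  set a := |psiC α k| with ha
  have ha0 : 0 ≤ a := abs_nonneg _
  have hle : a ≤ (Phi k)⁻¹ := abs_psiC_le α k
  rcases eq_or_lt_of_le ha0 with h0 | h0
  · rw [← h0, zero_mul]
    exact mul_nonneg (inv_nonneg.mpr (Phi_nonneg k)) (Real.exp_pos _).le
  · have hbpos : 0 < (Phi k)⁻¹ := lt_of_lt_of_le h0 hle
    have hPhipos : 0 < Phi k := by
      rcases eq_or_lt_of_le (Phi_nonneg k) with h | h
      · exfalso; rw [← h] at hbpos; simp at hbpos
      · exact h
    have hmul : Phi k * a ≤ 1 := by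
      calc Phi k * a ≤ Phi k * (Phi k)⁻¹ := mul_le_mul_of_nonneg_left hle (Phi_nonneg k)
        _ = 1 := mul_inv_cancel₀ hPhipos.ne'
    have harg : c * Phi k / 4 ≤ c / (4 * a) := by
      rw [div_le_div_iff₀ (by norm_num) (by positivity)]
      nlinarith
    exact mul_le_mul hle (Real.exp_le_exp.mpr (by linarith)) (Real.exp_pos _).le hbpos.le
lemma sin_ge_two_mul {x : ℝ} (h0 : 0 ≤ x) (h1 : x ≤ 1/2) : 2 * x ≤ Real.sin (π * x) := by
  have hpi : (0:ℝ) < π := Real.pi_pos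
  have h := Real.mul_le_sin (x := π * x) (by positivity) (by nlinarith)
  calc 2 * x = 2 / π * (π * x) := by field_simp
    _ ≤ Real.sin (π * x) := h

lemma exp_sin2_pointwise {t x : ℝ} (ht : 0 < t) (h0 : 0 ≤ x) (h1 : x ≤ 1) :
    Real.exp (-(t * Real.sin (π * x) ^ 2)) ≤
      Real.exp (-(4*t) * x^2) + Real.exp (-(4*t) * (1-x)^2) := by
  rcases le_total x (1/2) with hhalf | hhalf
  · have hsin := sin_ge_two_mul h0 hhalf
    have hsin0 : 0 ≤ Real.sin (π * x) := le_trans (by linarith) hsin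
    have hsq : 2 * x * (2 * x) ≤ Real.sin (π * x) * Real.sin (π * x) :=
      mul_le_mul hsin hsin (by linarith) hsin0
    have hsq2 : t * (2 * x * (2 * x)) ≤ t * (Real.sin (π * x) * Real.sin (π * x)) :=
      mul_le_mul_of_nonneg_left hsq ht.le
    have : Real.exp (-(t * Real.sin (π * x) ^ 2)) ≤ Real.exp (-(4*t) * x^2) :=
      Real.exp_le_exp.mpr (by nlinarith [hsq2])
    linarith [(Real.exp_pos (-(4*t) * (1-x)^2)).le]
  · have hrw : Real.sin (π * x) = Real.sin (π * (1-x)) := by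
      rw [mul_sub, mul_one, Real.sin_pi_sub]
    have hsin := sin_ge_two_mul (by linarith : (0:ℝ) ≤ 1 - x) (by linarith : 1 - x ≤ 1/2)
    have : Real.exp (-(t * Real.sin (π * x) ^ 2)) ≤ Real.exp (-(4*t) * (1-x)^2) := by
      rw [hrw]
      have hsin0 : 0 ≤ Real.sin (π * (1-x)) := le_trans (by linarith) hsin
      have hsq : 2 * (1-x) * (2 * (1-x)) ≤ Real.sin (π * (1-x)) * Real.sin (π * (1-x)) :=
        mul_le_mul hsin hsin (by linarith) hsin0
      have hsq2 : t * (2 * (1-x) * (2 * (1-x))) ≤ t * (Real.sin (π * (1-x)) * Real.sin (π * (1-x))) :=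
        mul_le_mul_of_nonneg_left hsq ht.le
      exact Real.exp_le_exp.mpr (by nlinarith [hsq2])
    linarith [(Real.exp_pos (-(4*t) * x^2)).le]

lemma exp_sin2_integral_le {t : ℝ} (ht : 0 < t) :
    ∫ x : Torus, Real.exp (-(t * sin2 x)) ≤ Real.sqrt π / Real.sqrt t := by
  have h := AddCircle.integral_preimage (T := 1) 0 (fun x : Torus => Real.exp (-(t * sin2 x)))
  rw [← h, ← intervalIntegral.integral_of_le (by norm_num : (0:ℝ) ≤ 0+1),
    show ((0:ℝ)+1) = 1 by norm_num]
  have hcont : Continuous fun x : ℝ => Real.exp (-(t * Real.sin (π * x) ^ 2)) := by continuity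
  have hgcont : Continuous fun x : ℝ => Real.exp (-(4*t) * x^2) := by continuity
  have hgcont' : Continuous fun x : ℝ => Real.exp (-(4*t) * (1-x)^2) := by continuity
  have step0 : (∫ x in (0:ℝ)..1, Real.exp (-(t * sin2 (x : Torus))))
      = ∫ x in (0:ℝ)..1, Real.exp (-(t * Real.sin (π * x) ^ 2)) := by
    apply intervalIntegral.integral_congr; intro x _; rfl
  have step1 : (∫ x in (0:ℝ)..1, Real.exp (-(t * Real.sin (π * x) ^ 2)))
      ≤ ∫ x in (0:ℝ)..1, (Real.exp (-(4*t) * x^2) + Real.exp (-(4*t) * (1-x)^2)) := by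
    apply intervalIntegral.integral_mono_on (by norm_num)
      (hcont.intervalIntegrable 0 1) ((hgcont.add hgcont').intervalIntegrable 0 1)
    intro x hx
    exact exp_sin2_pointwise ht hx.1 hx.2
  have step2 : (∫ x in (0:ℝ)..1, (Real.exp (-(4*t) * x^2) + Real.exp (-(4*t) * (1-x)^2)))
      = (∫ x in (0:ℝ)..1, Real.exp (-(4*t) * x^2))
        + ∫ x in (0:ℝ)..1, Real.exp (-(4*t) * (1-x)^2) :=
    intervalIntegral.integral_add (hgcont.intervalIntegrable 0 1)
      (hgcont'.intervalIntegrable 0 1)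
  have step3 : (∫ x in (0:ℝ)..1, Real.exp (-(4*t) * (1-x)^2))
      = ∫ x in (0:ℝ)..1, Real.exp (-(4*t) * x^2) := by
    have h := intervalIntegral.integral_comp_sub_left (a := (0:ℝ)) (b := 1)
      (fun u : ℝ => Real.exp (-(4*t) * u^2)) 1
    simp only [sub_self, sub_zero] at h
    exact h
  have hIoi : IntegrableOn (fun x : ℝ => Real.exp (-(4*t) * x^2)) (Set.Ioi 0) volume :=
    (integrable_exp_neg_mul_sq (by positivity : (0:ℝ) < 4*t)).integrableOn
  have step4 : (∫ x in (0:ℝ)..1, Real.exp (-(4*t) * x^2))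
      ≤ ∫ x in Set.Ioi (0:ℝ), Real.exp (-(4*t) * x^2) := by
    rw [intervalIntegral.integral_of_le (by norm_num : (0:ℝ) ≤ 1)]
    apply setIntegral_mono_set hIoi
    · exact (ae_restrict_iff' measurableSet_Ioi).mpr (ae_of_all _ fun z _ => (Real.exp_pos _).le)
    · exact HasSubset.Subset.eventuallyLE Set.Ioc_subset_Ioi_self
  have step5 : (∫ x in Set.Ioi (0:ℝ), Real.exp (-(4*t) * x^2)) = Real.sqrt (π / (4*t)) / 2 :=
    integral_gaussian_Ioi (4*t)
  have hfinal : Real.sqrt (π / (4*t)) ≤ Real.sqrt π / Real.sqrt t := by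
    rw [Real.sqrt_div Real.pi_nonneg]
    exact div_le_div_of_nonneg_left (Real.sqrt_nonneg π) (Real.sqrt_pos.mpr ht)
      (Real.sqrt_le_sqrt (by linarith))
  calc (∫ x in (0:ℝ)..1, Real.exp (-(t * sin2 (x : Torus))))
      ≤ 2 * ∫ x in Set.Ioi (0:ℝ), Real.exp (-(4*t) * x^2) := by
        rw [step0]; rw [step2] at step1; rw [step3] at step1; linarith [step1, step4]
    _ = Real.sqrt (π / (4*t)) := by rw [step5]; ring
    _ ≤ Real.sqrt π / Real.sqrt t := hfinal
/-- The dominating function `G(k) = 3 Φ(k)⁻¹ e^{-cΦ(k)/4}`. -/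
def Gfun (c : ℝ) (k : T2) : ℝ := 3 * ((Phi k)⁻¹ * Real.exp (-(c * Phi k / 4)))

lemma Gfun_nonneg (c : ℝ) (k : T2) : 0 ≤ Gfun c k :=
  mul_nonneg (by norm_num)
    (mul_nonneg (inv_nonneg.mpr (Phi_nonneg k)) (Real.exp_pos _).le)

lemma measurable_Gfun (c : ℝ) : Measurable (Gfun c) := by
  unfold Gfun
  exact (((continuous_Phi.measurable).inv.mul
    (Real.measurable_exp.comp
      (((continuous_Phi.measurable.const_mul c).div_const 4).neg))).const_mul 3)

lemma exp_le_one_of_nonneg {y : ℝ} (hy : 0 ≤ y) : Real.exp (-y) ≤ 1 := by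
  rw [← Real.exp_zero]
  exact Real.exp_le_exp.mpr (by linarith)

lemma phi4_smul_Gfun_le (c : ℝ) (hc : 0 ≤ c) (k : T2) :
    (phi4 k : ℝ) * Gfun c k
      ≤ (3/4) * (Real.exp (-(2*c*sin2 k.1)) * Real.exp (-(2*c*sin2 k.2))) := by
  rw [coe_phi4]
  have hexp : Real.exp (-(c * Phi k / 4))
      = Real.exp (-(2*c*sin2 k.1)) * Real.exp (-(2*c*sin2 k.2)) := by
    rw [← Real.exp_add]; congr 1; unfold Phi; ring
  rw [Gfun, hexp]
  rcases eq_or_lt_of_le (Phi_nonneg k) with h | h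
  · rw [← h]
    simp only [zero_div, zero_mul]
    positivity
  · have : Phi k / 4 * (3 * ((Phi k)⁻¹ *
        (Real.exp (-(2*c*sin2 k.1)) * Real.exp (-(2*c*sin2 k.2)))))
        = (3/4) * (Real.exp (-(2*c*sin2 k.1)) * Real.exp (-(2*c*sin2 k.2))) := by
      field_simp
    rw [this]

lemma measurable_expprod (c : ℝ) :
    Measurable (fun k : T2 =>
      (3/4) * (Real.exp (-(2*c*sin2 k.1)) * Real.exp (-(2*c*sin2 k.2)))) := by
  refine Measurable.const_mul (Measurable.mul ?_ ?_) _
  · exact Real.measurable_exp.comp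
      (((measurable_sin2.comp measurable_fst).const_mul (2*c)).neg)
  · exact Real.measurable_exp.comp
      (((measurable_sin2.comp measurable_snd).const_mul (2*c)).neg)

lemma integrable_expprod (c : ℝ) (hc : 0 ≤ c) :
    Integrable (fun k : T2 =>
      (3/4) * (Real.exp (-(2*c*sin2 k.1)) * Real.exp (-(2*c*sin2 k.2))))
      (volume : Measure T2) := by
  refine integrable_of_bounded ((measurable_expprod c).aestronglyMeasurable) (C := 3/4) fun k => ?_
  rw [abs_of_nonneg (by positivity)]
  have h1 : Real.exp (-(2*c*sin2 k.1)) ≤ 1 :=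
    exp_le_one_of_nonneg (by have := sin2_nonneg k.1; positivity)
  have h2 : Real.exp (-(2*c*sin2 k.2)) ≤ 1 :=
    exp_le_one_of_nonneg (by have := sin2_nonneg k.2; positivity)
  nlinarith [(Real.exp_pos (-(2*c*sin2 k.1))).le, (Real.exp_pos (-(2*c*sin2 k.2))).le]

lemma integrable_Gfun (c : ℝ) (hc : 0 ≤ c) : Integrable (Gfun c) nu := by
  rw [nu, integrable_withDensity_iff_integrable_smul measurable_phi4]
  refine integrable_of_bounded ?_ (C := 3/4) fun k => ?_
  · simp only [NNReal.smul_def, smul_eq_mul]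
    exact ((measurable_phi4.coe_nnreal_real).mul (measurable_Gfun c)).aestronglyMeasurable
  · simp only [NNReal.smul_def, smul_eq_mul]
    rw [abs_of_nonneg (mul_nonneg (NNReal.coe_nonneg _) (Gfun_nonneg c k))]
    refine (phi4_smul_Gfun_le c hc k).trans ?_
    have h1 : Real.exp (-(2*c*sin2 k.1)) ≤ 1 :=
      exp_le_one_of_nonneg (by have := sin2_nonneg k.1; positivity)
    have h2 : Real.exp (-(2*c*sin2 k.2)) ≤ 1 :=
      exp_le_one_of_nonneg (by have := sin2_nonneg k.2; positivity)
    nlinarith [(Real.exp_pos (-(2*c*sin2 k.1))).le, (Real.exp_pos (-(2*c*sin2 k.2))).le]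
/-- There is a constant `C₀ < ∞` such that for every `N ≥ 2`, `α`,
`m ≥ 1` and `k ∈ 𝕋²`,
`∫ Pᵐ(k,dk') ∫_0^∞ e^{-z} z |ψ^α(k')| 𝟙{z|ψ^α(k')| > √N} dz ≤ C₀/√N`. -/
theorem truncated_tail_bound :
    ∃ C₀ : ℝ, 0 ≤ C₀ ∧ ∀ (N : ℕ), 2 ≤ N → ∀ (α : Fin 2) (m : ℕ), 1 ≤ m → ∀ k : T2,
      (∫ k', (∫ z in Set.Ioi (0:ℝ),
          Real.exp (-z) * z * |psiC α k'| *
            (if Real.sqrt N < z * |psiC α k'| then 1 else 0)) ∂(Pn m k))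
        ≤ C₀ / Real.sqrt N := by
  refine ⟨3, by norm_num, ?_⟩
  intro N hN α m hm k
  have hN2 : (2:ℝ) ≤ (N:ℝ) := by exact_mod_cast hN
  set c := Real.sqrt (N:ℝ) with hcdef
  have hc0 : (0:ℝ) ≤ c := Real.sqrt_nonneg _
  have hcpos : (0:ℝ) < c := Real.sqrt_pos.mpr (by linarith)
  set I : T2 → ℝ := fun k' => ∫ z in Set.Ioi (0:ℝ),
      Real.exp (-z) * z * |psiC α k'| * (if c < z * |psiC α k'| then 1 else 0) with hIdef
  have hIG : ∀ k', I k' ≤ Gfun c k' := by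
    intro k'
    refine (inner_bound hc0 (abs_nonneg _)).trans ?_
    rw [Gfun]
    exact mul_le_mul_of_nonneg_left (psi_exp_le hc0 α k') (by norm_num)
  have hInn : ∀ k', 0 ≤ I k' := by
    intro k'
    refine setIntegral_nonneg measurableSet_Ioi fun z hz => ?_
    refine mul_nonneg (mul_nonneg (mul_nonneg (Real.exp_pos _).le (le_of_lt hz))
      (abs_nonneg _)) ?_
    split_ifs <;> norm_num
  have hle := Pn_le_nu hm k
  have hGnu := integrable_Gfun c hc0
  have h1 : (∫ k', I k' ∂(Pn m k)) ≤ ∫ k', Gfun c k' ∂(Pn m k) :=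
    integral_mono_of_nonneg (ae_of_all _ hInn) (hGnu.mono_measure hle) (ae_of_all _ hIG)
  have h2 : (∫ k', Gfun c k' ∂(Pn m k)) ≤ ∫ k', Gfun c k' ∂nu :=
    integral_mono_measure hle (ae_of_all _ (Gfun_nonneg c)) hGnu
  have h3 : (∫ k', Gfun c k' ∂nu) ≤ 3 / c := by
    have e1 : (∫ k', Gfun c k' ∂nu)
        = ∫ k', phi4 k' • Gfun c k' ∂(volume : Measure T2) := by
      rw [nu]; exact integral_withDensity_eq_integral_smul measurable_phi4 _
    rw [e1]
    have e2 : (∫ k', phi4 k' • Gfun c k' ∂(volume : Measure T2))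
        ≤ ∫ k' : T2, (3/4) * (Real.exp (-(2*c*sin2 k'.1)) * Real.exp (-(2*c*sin2 k'.2))) := by
      refine integral_mono_of_nonneg (ae_of_all _ fun q => ?_) (integrable_expprod c hc0)
        (ae_of_all _ fun q => ?_)
      · simp only [NNReal.smul_def, smul_eq_mul]
        exact mul_nonneg (NNReal.coe_nonneg _) (Gfun_nonneg c q)
      · simp only [NNReal.smul_def, smul_eq_mul]
        exact phi4_smul_Gfun_le c hc0 q
    refine e2.trans ?_
    have e3 : (∫ k' : T2, (3/4) * (Real.exp (-(2*c*sin2 k'.1)) * Real.exp (-(2*c*sin2 k'.2))))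
        = (3/4) * ((∫ x : Torus, Real.exp (-(2*c*sin2 x)))
            * (∫ x : Torus, Real.exp (-(2*c*sin2 x)))) := by
      rw [integral_const_mul, Measure.volume_eq_prod,
        MeasureTheory.integral_prod_mul (μ := (volume : Measure Torus))
          (ν := (volume : Measure Torus))
          (f := fun x : Torus => Real.exp (-(2*c*sin2 x)))
          (g := fun x : Torus => Real.exp (-(2*c*sin2 x)))]
    rw [e3]
    have hfnn : 0 ≤ ∫ x : Torus, Real.exp (-(2*c*sin2 x)) :=
      integral_nonneg fun x => (Real.exp_pos _).le
    have hfle : (∫ x : Torus, Real.exp (-(2*c*sin2 x))) ≤ Real.sqrt π / Real.sqrt (2*c) :=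
      exp_sin2_integral_le (by positivity)
    have hprod : (∫ x : Torus, Real.exp (-(2*c*sin2 x)))
          * (∫ x : Torus, Real.exp (-(2*c*sin2 x)))
        ≤ (Real.sqrt π / Real.sqrt (2*c)) * (Real.sqrt π / Real.sqrt (2*c)) :=
      mul_le_mul hfle hfle hfnn (by positivity)
    have hval : (Real.sqrt π / Real.sqrt (2*c)) * (Real.sqrt π / Real.sqrt (2*c))
        = π / (2*c) := by
      rw [div_mul_div_comm, Real.mul_self_sqrt Real.pi_nonneg,
        Real.mul_self_sqrt (by positivity)]
    rw [hval] at hprod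
    calc (3/4) * ((∫ x : Torus, Real.exp (-(2*c*sin2 x)))
            * (∫ x : Torus, Real.exp (-(2*c*sin2 x))))
        ≤ (3/4) * (π / (2*c)) := mul_le_mul_of_nonneg_left hprod (by norm_num)
      _ ≤ 3 / c := by
          have h := Real.pi_le_four
          rw [show (3:ℝ)/4 * (π/(2*c)) = 3*π/(8*c) by ring,
            div_le_div_iff₀ (by positivity) hcpos]
          nlinarith
  calc (∫ k', I k' ∂(Pn m k)) ≤ ∫ k', Gfun c k' ∂(Pn m k) := h1
    _ ≤ ∫ k', Gfun c k' ∂nu := h2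
    _ ≤ 3 / c := h3

end
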